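/- In the federated least-squares setting with Ĥ = (1/M)Σᵢ Ĥ⁽ⁱ⁾ and local approximations Ĥ⁽ⁱ⁾ using parameters ρ⁽ⁱ⁾ ∈ (0, λ_{q⁽ⁱ⁾+1}⁽ⁱ⁾], the step size η = minᵢ ρ⁽ⁱ⁾/λ_{q⁽ⁱ⁾+1}⁽ⁱ⁾ satisfies Ĥ − ηH ⪰ 0, where H = (1/M)Σᵢ H⁽ⁱ⁾; consequently this η satisfies the Armijo–Goldstein condition for any α ∈ (0, 1/2). -/

import Mathlib

open scoped RealInnerProductSpace

/-- Rank-one projection `x ↦ ⟪v, x⟫ • v`. -/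
noncomputable def projCL {n : ℕ} (v : EuclideanSpace ℝ (Fin n)) :
    EuclideanSpace ℝ (Fin n) →L[ℝ] EuclideanSpace ℝ (Fin n) :=
  (innerSL ℝ v).smulRight v

/-- The approximation `Ĥ(ρ,q)` keeping the top `q` eigenpairs and replacing the
remaining eigenvalues by `ρ`. -/
noncomputable def hatH {n : ℕ} (v : OrthonormalBasis (Fin n) ℝ (EuclideanSpace ℝ (Fin n)))
    (lam : Fin n → ℝ) (q : ℕ) (ρ : ℝ) :
    EuclideanSpace ℝ (Fin n) →L[ℝ] EuclideanSpace ℝ (Fin n) :=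
  ∑ k : Fin n, (if (k : ℕ) < q then lam k else ρ) • projCL (v k)

/-- The inverse of `Ĥ(ρ,q)`. -/
noncomputable def hatHinv {n : ℕ} (v : OrthonormalBasis (Fin n) ℝ (EuclideanSpace ℝ (Fin n)))
    (lam : Fin n → ℝ) (q : ℕ) (ρ : ℝ) :
    EuclideanSpace ℝ (Fin n) →L[ℝ] EuclideanSpace ℝ (Fin n) :=
  ∑ k : Fin n, (if (k : ℕ) < q then (lam k)⁻¹ else ρ⁻¹) • projCL (v k)

/-- Iteration matrix `I − η Ĥ(ρ,q)⁻¹ H`. -/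
noncomputable def iterMat {n : ℕ} (H : EuclideanSpace ℝ (Fin n) →L[ℝ] EuclideanSpace ℝ (Fin n))
    (v : OrthonormalBasis (Fin n) ℝ (EuclideanSpace ℝ (Fin n)))
    (lam : Fin n → ℝ) (q : ℕ) (ρ η : ℝ) :
    EuclideanSpace ℝ (Fin n) →L[ℝ] EuclideanSpace ℝ (Fin n) :=
  ContinuousLinearMap.id ℝ _ - η • ((hatHinv v lam q ρ).comp H)

lemma hatH_inner_eq {n : ℕ} (v : OrthonormalBasis (Fin n) ℝ (EuclideanSpace ℝ (Fin n)))
    (lam : Fin n → ℝ) (q : ℕ) (ρ : ℝ) (x y : EuclideanSpace ℝ (Fin n)) :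
    (inner ℝ x (hatH v lam q ρ y) : ℝ) =
      ∑ k : Fin n, (if (k : ℕ) < q then lam k else ρ) * ((inner ℝ (v k) x : ℝ) * (inner ℝ (v k) y : ℝ)) := by
  simp only [hatH, ContinuousLinearMap.sum_apply, ContinuousLinearMap.smul_apply, inner_sum]
  refine Finset.sum_congr rfl fun k _ => ?_
  simp only [projCL, ContinuousLinearMap.smulRight_apply, innerSL_apply_apply,
    real_inner_smul_right, real_inner_comm x (v k)]
  ring

lemma diag_inner_eq {n : ℕ} (v : OrthonormalBasis (Fin n) ℝ (EuclideanSpace ℝ (Fin n)))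
    (lam : Fin n → ℝ) (T : EuclideanSpace ℝ (Fin n) →L[ℝ] EuclideanSpace ℝ (Fin n))
    (hT : ∀ k, T (v k) = lam k • v k) (x y : EuclideanSpace ℝ (Fin n)) :
    (inner ℝ x (T y) : ℝ) = ∑ k : Fin n, lam k * ((inner ℝ (v k) x : ℝ) * (inner ℝ (v k) y : ℝ)) := by
  conv_lhs => rw [← v.sum_repr y]
  rw [map_sum, inner_sum]
  refine Finset.sum_congr rfl fun k _ => ?_
  rw [map_smul, hT, v.repr_apply_apply]
  simp only [real_inner_smul_right, real_inner_comm x (v k), smul_eq_mul]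
  ring

set_option maxHeartbeats 1000000

/-- in the federated least-squares setting with `ρ⁽ⁱ⁾ ∈ (0, λ_{q⁽ⁱ⁾+1}⁽ⁱ⁾]`,
the step size `η = minᵢ ρ⁽ⁱ⁾/λ_{q⁽ⁱ⁾+1}⁽ⁱ⁾` makes `Ĥ − ηH` positive semidefinite, and
consequently satisfies the Armijo–Goldstein condition for any `α ∈ (0,1/2)`. -/
theorem stmt6 (n M : ℕ) (q : Fin (M + 1) → ℕ) (hq : ∀ i, q i ≤ n)
    (v : Fin (M + 1) → OrthonormalBasis (Fin (n + 1)) ℝ (EuclideanSpace ℝ (Fin (n + 1))))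
    (lam : Fin (M + 1) → Fin (n + 1) → ℝ)
    (Hi : Fin (M + 1) → (EuclideanSpace ℝ (Fin (n + 1)) →L[ℝ] EuclideanSpace ℝ (Fin (n + 1))))
    (hmono : ∀ i, ∀ k l : Fin (n + 1), k ≤ l → lam i l ≤ lam i k)
    (hpos : ∀ i k, 0 < lam i k)
    (hHi : ∀ i k, Hi i (v i k) = lam i k • v i k)
    (ρi : Fin (M + 1) → ℝ) (hρpos : ∀ i, 0 < ρi i)
    (hρub : ∀ i, ρi i ≤ lam i ⟨q i, Nat.lt_succ_of_le (hq i)⟩)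
    (H Hhat HhatInv : EuclideanSpace ℝ (Fin (n + 1)) →L[ℝ] EuclideanSpace ℝ (Fin (n + 1)))
    (hH : H = ((M : ℝ) + 1)⁻¹ • ∑ i, Hi i)
    (hHhat : Hhat = ((M : ℝ) + 1)⁻¹ • ∑ i, hatH (v i) (lam i) (q i) (ρi i))
    (hinv₁ : HhatInv.comp Hhat = ContinuousLinearMap.id ℝ _)
    (hinv₂ : Hhat.comp HhatInv = ContinuousLinearMap.id ℝ _)
    (η : ℝ)
    (hη : η = Finset.univ.inf' Finset.univ_nonempty
        (fun i : Fin (M + 1) => ρi i / lam i ⟨q i, Nat.lt_succ_of_le (hq i)⟩)) :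
    (∀ x : EuclideanSpace ℝ (Fin (n + 1)), 0 ≤ (inner ℝ x ((Hhat - η • H) x) : ℝ)) ∧
    (∀ (θ θstar : EuclideanSpace ℝ (Fin (n + 1))) (fstar α : ℝ), 0 < α → α < 1 / 2 →
      fstar + (1 / 2) * (inner ℝ ((θ - η • HhatInv (H (θ - θstar))) - θstar)
          (H ((θ - η • HhatInv (H (θ - θstar))) - θstar)) : ℝ) ≤
        (fstar + (1 / 2) * (inner ℝ (θ - θstar) (H (θ - θstar)) : ℝ)) -
          α * η * (inner ℝ (HhatInv (H (θ - θstar))) (H (θ - θstar)) : ℝ)) := by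
  have hlamq : ∀ i, (0:ℝ) < lam i ⟨q i, Nat.lt_succ_of_le (hq i)⟩ := fun i => hpos i _
  have hη_le : ∀ i, η ≤ ρi i / lam i ⟨q i, Nat.lt_succ_of_le (hq i)⟩ := by
    intro i; rw [hη]; exact Finset.inf'_le _ (Finset.mem_univ i)
  have hη_pos : 0 < η := by
    rw [hη]
    exact (Finset.lt_inf'_iff _).mpr fun i _ => div_pos (hρpos i) (hlamq i)
  -- per-machine positive semidefiniteness (scalar form)
  have key : ∀ (i : Fin (M+1)) (x : EuclideanSpace ℝ (Fin (n+1))),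
      0 ≤ (inner ℝ x (hatH (v i) (lam i) (q i) (ρi i) x) : ℝ)
          - η * (inner ℝ x (Hi i x) : ℝ) := by
    intro i x
    have hηb : η * lam i ⟨q i, Nat.lt_succ_of_le (hq i)⟩ ≤ ρi i :=
      (le_div_iff₀ (hlamq i)).mp (hη_le i)
    rw [hatH_inner_eq, diag_inner_eq (v i) (lam i) (Hi i) (hHi i), Finset.mul_sum,
      ← Finset.sum_sub_distrib]
    apply Finset.sum_nonneg
    intro k _
    have hc : (0:ℝ) ≤ (inner ℝ (v i k) x : ℝ) * (inner ℝ (v i k) x : ℝ) := mul_self_nonneg _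
    have hcoef : η * lam i k ≤ (if (k:ℕ) < q i then lam i k else ρi i) := by
      split
      · have h1 : η ≤ 1 := by nlinarith [hρub i, hlamq i]
        nlinarith [hpos i k]
      · rename_i hk
        have hkl : lam i k ≤ lam i ⟨q i, Nat.lt_succ_of_le (hq i)⟩ := by
          apply hmono
          simpa [Fin.le_def] using Nat.le_of_not_lt hk
        nlinarith [hpos i k, hη_pos]
    nlinarith [mul_le_mul_of_nonneg_right hcoef hc]
  -- PSD of Hhat - η H
  have psd : ∀ x : EuclideanSpace ℝ (Fin (n+1)), 0 ≤ (inner ℝ x ((Hhat - η • H) x) : ℝ) := by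
    intro x
    have hrw2 : (inner ℝ x ((Hhat - η • H) x) : ℝ)
        = ((M:ℝ)+1)⁻¹ * ∑ i, ((inner ℝ x (hatH (v i) (lam i) (q i) (ρi i) x) : ℝ)
            - η * (inner ℝ x (Hi i x) : ℝ)) := by
      rw [hH, hHhat]
      simp only [ContinuousLinearMap.sub_apply, ContinuousLinearMap.smul_apply,
        ContinuousLinearMap.sum_apply, inner_sub_right, real_inner_smul_right, inner_sum]
      rw [Finset.sum_sub_distrib]
      rw [show (∑ i, η * (inner ℝ x (Hi i x) : ℝ)) = η * ∑ i, (inner ℝ x (Hi i x) : ℝ) from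
        (Finset.mul_sum _ _ _).symm]
      ring
    rw [hrw2]
    exact mul_nonneg (by positivity) (Finset.sum_nonneg fun i _ => key i x)
  refine ⟨psd, ?_⟩
  -- Armijo–Goldstein
  intro θ θstar fstar α hα0 hα1
  set δ := θ - θstar with hδ
  have hsub : θ - η • HhatInv (H δ) - θstar = δ - η • HhatInv (H δ) := by
    rw [hδ]; exact sub_right_comm θ _ θstar
  rw [hsub]
  set g := H δ with hg
  set d := HhatInv g with hd
  have hHhatd : Hhat d = g := by
    have h := ContinuousLinearMap.ext_iff.mp hinv₂ g
    simpa [ContinuousLinearMap.comp_apply, hd] using h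
  have hHhatPSD : 0 ≤ (inner ℝ d (Hhat d) : ℝ) := by
    rw [hHhat]
    simp only [ContinuousLinearMap.smul_apply, ContinuousLinearMap.sum_apply,
      real_inner_smul_right, inner_sum]
    refine mul_nonneg (by positivity) (Finset.sum_nonneg fun i _ => ?_)
    rw [hatH_inner_eq]
    refine Finset.sum_nonneg fun k _ => ?_
    have hμ : (0:ℝ) ≤ if (k:ℕ) < q i then lam i k else ρi i := by
      split
      · exact (hpos i k).le
      · exact (hρpos i).le
    exact mul_nonneg hμ (mul_self_nonneg _)
  have hHisym : ∀ i (x y : EuclideanSpace ℝ (Fin (n+1))),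
      (inner ℝ x (Hi i y) : ℝ) = (inner ℝ y (Hi i x) : ℝ) := by
    intro i x y
    rw [diag_inner_eq (v i) (lam i) (Hi i) (hHi i),
      diag_inner_eq (v i) (lam i) (Hi i) (hHi i)]
    exact Finset.sum_congr rfl fun k _ => by ring
  have hHsym : ∀ x y : EuclideanSpace ℝ (Fin (n+1)),
      (inner ℝ x (H y) : ℝ) = (inner ℝ y (H x) : ℝ) := by
    intro x y
    rw [hH]
    simp only [ContinuousLinearMap.smul_apply, ContinuousLinearMap.sum_apply,
      real_inner_smul_right, inner_sum]
    congr 1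
    exact Finset.sum_congr rfl fun i _ => hHisym i x y
  have hdg0 : 0 ≤ (inner ℝ d g : ℝ) := by rw [← hHhatd]; exact hHhatPSD
  have hkey : η * (inner ℝ d (H d) : ℝ) ≤ (inner ℝ d g : ℝ) := by
    have h0 := psd d
    have h1 : (inner ℝ d ((Hhat - η • H) d) : ℝ)
        = (inner ℝ d (Hhat d) : ℝ) - η * (inner ℝ d (H d) : ℝ) := by
      simp only [ContinuousLinearMap.sub_apply, ContinuousLinearMap.smul_apply,
        inner_sub_right, real_inner_smul_right]
    rw [h1, hHhatd] at h0
    linarith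
  have hexp : (inner ℝ (δ - η • d) (H (δ - η • d)) : ℝ)
      = (inner ℝ δ g : ℝ) - 2*η*(inner ℝ d g : ℝ) + η^2 * (inner ℝ d (H d) : ℝ) := by
    have h1 : H (δ - η • d) = g - η • H d := by rw [map_sub, map_smul, hg]
    have h3 : (inner ℝ δ (H d) : ℝ) = (inner ℝ d g : ℝ) := by rw [hHsym δ d, ← hg]
    rw [h1]
    simp only [inner_sub_left, inner_sub_right, real_inner_smul_left, real_inner_smul_right]
    rw [h3]
    ring
  rw [hexp]
  nlinarith [mul_le_mul_of_nonneg_left hkey hη_pos.le, mul_nonneg hη_pos.le hdg0]
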